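/- Let G be a finite simple graph on a vertex type V and let s be a subset of V. If G is ħ-perfect, then the induced subgraph of G on s is ħ-perfect. -/

import Mathlib

open Matrix

/-- A realization of the graph `G` in dimension `d`: a family of Hermitian involutions that
anticommute on edges and commute on non-edges. -/
def IsRealization {V : Type*} (G : SimpleGraph V) (d : ℕ)
    (S : V → Matrix (Fin d) (Fin d) ℂ) : Prop :=
  (∀ i, (S i).IsHermitian) ∧ (∀ i, S i * S i = 1) ∧
    (∀ i j, G.Adj i j → S i * S j = -(S j * S i)) ∧
    (∀ i j, i ≠ j → ¬G.Adj i j → S i * S j = S j * S i)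

/-- The (real) expectation value `ψᴴ A ψ` of a matrix `A` at a vector `ψ`. -/
noncomputable def expectation {d : ℕ} (A : Matrix (Fin d) (Fin d) ℂ) (ψ : Fin d → ℂ) : ℝ :=
  (star ψ ⬝ᵥ (A *ᵥ ψ)).re

/-- The beta value of a realization: supremum over unit vectors of the weighted sum of squared
expectations. -/
noncomputable def betaVal {V : Type*} [Fintype V] {d : ℕ}
    (S : V → Matrix (Fin d) (Fin d) ℂ) (w : V → ℝ) : ℝ :=
  sSup {r : ℝ | ∃ ψ : Fin d → ℂ, star ψ ⬝ᵥ ψ = 1 ∧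
    r = ∑ i, w i * (expectation (S i) ψ) ^ 2}

/-- A finite set of vertices is independent if no two of its members are adjacent. -/
def IsIndepSet {V : Type*} (G : SimpleGraph V) (I : Finset V) : Prop :=
  ∀ a ∈ I, ∀ b ∈ I, ¬G.Adj a b

/-- The weighted independence number. -/
noncomputable def alphaW {V : Type*} [Fintype V] (G : SimpleGraph V) (w : V → ℝ) : ℝ :=
  sSup {r : ℝ | ∃ I : Finset V, IsIndepSet G I ∧ r = ∑ i ∈ I, w i}

/-- A graph is ħ-perfect if for every realization and every nonnegative weight vector the beta
value equals the weighted independence number. -/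
def HbarPerfect {V : Type*} [Fintype V] (G : SimpleGraph V) : Prop :=
  ∀ d : ℕ, 1 ≤ d → ∀ S : V → Matrix (Fin d) (Fin d) ℂ, IsRealization G d S →
    ∀ w : V → ℝ, (∀ i, 0 ≤ w i) → betaVal S w = alphaW G w



section Pauli
set_option linter.unusedSectionVars false
variable {Q : Type*} [Fintype Q] [DecidableEq Q]

noncomputable def eps (z b : Q → Bool) : ℂ := ∏ i, (if z i && b i then (-1 : ℂ) else 1)

noncomputable def Wm (z c : Q → Bool) : Matrix (Q → Bool) (Q → Bool) ℂ :=
  Matrix.of fun p q => if p = (fun i => xor (q i) (c i)) then eps z q else 0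

lemma eps_mul_self (z b : Q → Bool) : eps z b * eps z b = 1 := by
  rw [eps, ← Finset.prod_mul_distrib]
  apply Finset.prod_eq_one
  intro i _
  split_ifs <;> ring

lemma eps_xor_right (z b c : Q → Bool) :
    eps z (fun i => xor (b i) (c i)) = eps z b * eps z c := by
  rw [eps, eps, eps, ← Finset.prod_mul_distrib]
  apply Finset.prod_congr rfl
  intro i _
  cases hz : z i <;> cases hb : b i <;> cases hc : c i <;> simp

lemma eps_xor_left (z z' b : Q → Bool) :
    eps (fun i => xor (z i) (z' i)) b = eps z b * eps z' b := by
  rw [eps, eps, eps, ← Finset.prod_mul_distrib]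
  apply Finset.prod_congr rfl
  intro i _
  cases hz : z i <;> cases hz' : z' i <;> cases hb : b i <;> simp

lemma eps_eq_one {z b : Q → Bool} (h : ∀ i, ¬(z i = true ∧ b i = true)) : eps z b = 1 := by
  rw [eps]
  apply Finset.prod_eq_one
  intro i _
  rw [if_neg]
  rw [Bool.and_eq_true]
  exact h i

lemma star_eps (z b : Q → Bool) : star (eps z b) = eps z b := by
  rw [eps, star_prod]
  apply Finset.prod_congr rfl
  intro i _
  split_ifs <;> simp

lemma eps_single (z : Q → Bool) (k : Q) :
    eps z (fun j => decide (k = j)) = if z k then -1 else 1 := by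
  rw [eps]
  rw [Finset.prod_eq_single k]
  · simp
  · intro j _ hj
    simp [Ne.symm hj]
  · simp

lemma Wm_mul (z c z' c' : Q → Bool) :
    Wm z c * Wm z' c' =
      eps z c' • Wm (fun i => xor (z i) (z' i)) (fun i => xor (c i) (c' i)) := by
  ext p q
  rw [mul_apply]
  rw [Finset.sum_eq_single (fun i => xor (q i) (c' i))]
  · have hfe : (fun i => xor (xor (q i) (c' i)) (c i)) =
        (fun i => xor (q i) (xor (c i) (c' i))) := by
      funext i; cases q i <;> cases c i <;> cases c' i <;> rfl
    simp only [Wm, of_apply, Matrix.smul_apply, smul_eq_mul, if_pos rfl, if_true]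
    rw [hfe]
    split_ifs with h1
    · rw [eps_xor_right, eps_xor_left]; ring
    · ring
  · intro k _ hk
    simp only [Wm, of_apply]
    rw [if_neg hk, mul_zero]
  · simp

lemma Wm_ff : Wm (Q := Q) (fun _ => false) (fun _ => false) = 1 := by
  ext p q
  simp only [Wm, of_apply, one_apply]
  have : (fun i => xor (q i) false) = q := by funext i; simp
  rw [this]
  have : eps (Q := Q) (fun _ => false) q = 1 := eps_eq_one (by simp)
  rw [this]

lemma Wm_sq (z c : Q → Bool) : Wm z c * Wm z c = eps z c • 1 := by
  rw [Wm_mul]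
  congr 1
  have h1 : (fun i => xor (z i) (z i)) = (fun _ => false : Q → Bool) := by funext i; simp
  have h2 : (fun i => xor (c i) (c i)) = (fun _ => false : Q → Bool) := by funext i; simp
  rw [h1, h2, Wm_ff]

lemma Wm_herm (z c : Q → Bool) : (Wm z c)ᴴ = eps z c • Wm z c := by
  ext p q
  simp only [conjTranspose_apply, Wm, of_apply, Matrix.smul_apply, smul_eq_mul]
  have hcond : (q = fun i => xor (p i) (c i)) ↔ (p = fun i => xor (q i) (c i)) := by
    constructor <;> intro h <;>
      (funext i; rw [congrFun h i]; cases p i <;> cases q i <;> cases c i <;> rfl)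
  split_ifs with h1 h2 h2
  · rw [h2] at h1 ⊢
    rw [star_eps]
    rw [show eps z (fun i => xor (q i) (c i)) = eps z q * eps z c from eps_xor_right z q c]
    ring
  · exact absurd (hcond.mp h1) h2
  · exact absurd (hcond.mpr h2) h1
  · simp

end Pauli

section Helpers
open Matrix Kronecker
open scoped InnerProductSpace

set_option linter.unusedSectionVars false

lemma kron_conjTranspose {n m : Type*} (A : Matrix n n ℂ) (B : Matrix m m ℂ) :
    (A ⊗ₖ B)ᴴ = Aᴴ ⊗ₖ Bᴴ := by
  ext ⟨a, p⟩ ⟨b, q⟩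
  simp only [conjTranspose_apply, kroneckerMap_apply, star_mul']

lemma neg_kron {n m : Type*} (A : Matrix n n ℂ) (B : Matrix m m ℂ) :
    (-A) ⊗ₖ B = -(A ⊗ₖ B) := by
  ext ⟨a, p⟩ ⟨b, q⟩
  simp [kroneckerMap_apply]

lemma sum_prod_mul {n m : Type*} [Fintype n] [Fintype m] (f : n → ℂ) (g : m → ℂ) :
    ∑ x : n × m, f x.1 * g x.2 = (∑ a, f a) * (∑ p, g p) := by
  rw [Fintype.sum_prod_type, Finset.sum_mul_sum]

lemma kron_mulVec {n m : Type*} [Fintype n] [Fintype m]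
    (A : Matrix n n ℂ) (B : Matrix m m ℂ) (ψ : n → ℂ) (φ : m → ℂ) :
    ((A ⊗ₖ B) *ᵥ fun x => ψ x.1 * φ x.2) = fun x => (A *ᵥ ψ) x.1 * (B *ᵥ φ) x.2 := by
  funext ⟨a, p⟩
  simp only [mulVec, dotProduct, kroneckerMap_apply]
  rw [Fintype.sum_prod_type, Finset.sum_mul_sum]
  apply Finset.sum_congr rfl; intro b _
  apply Finset.sum_congr rfl; intro q _
  ring

lemma dot_prod_split {n m : Type*} [Fintype n] [Fintype m]
    (ψ f : n → ℂ) (φ g : m → ℂ) :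
    (star fun x : n × m => ψ x.1 * φ x.2) ⬝ᵥ (fun x : n × m => f x.1 * g x.2)
      = (star ψ ⬝ᵥ f) * (star φ ⬝ᵥ g) := by
  simp only [dotProduct, Pi.star_apply, star_mul']
  rw [Fintype.sum_prod_type, Finset.sum_mul_sum]
  apply Finset.sum_congr rfl; intro b _
  apply Finset.sum_congr rfl; intro q _
  ring

/-- dot product of star with self, as a real number -/
lemma star_dot_self_re {n : Type*} [Fintype n] (ψ : n → ℂ) :
    star ψ ⬝ᵥ ψ = ((∑ i, Complex.normSq (ψ i) : ℝ) : ℂ) := by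
  simp only [dotProduct, Pi.star_apply]
  push_cast
  apply Finset.sum_congr rfl; intro i _
  rw [Complex.star_def, Complex.normSq_eq_conj_mul_self]

lemma expectation_sq_le_one {d : ℕ} {A : Matrix (Fin d) (Fin d) ℂ} (hA : A.IsHermitian)
    (hA2 : A * A = 1) {ψ : Fin d → ℂ} (hψ : star ψ ⬝ᵥ ψ = 1) :
    (expectation A ψ) ^ 2 ≤ 1 := by
  have key : ∀ χ : Fin d → ℂ, star χ ⬝ᵥ χ = 1 → ‖(WithLp.equiv 2 (Fin d → ℂ)).symm χ‖ = 1 := by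
    intro χ hχ
    have h1 : (⟪(WithLp.equiv 2 (Fin d → ℂ)).symm χ, (WithLp.equiv 2 (Fin d → ℂ)).symm χ⟫_ℂ) = 1 := by
      rw [PiLp.inner_apply]
      simpa [dotProduct, RCLike.inner_apply, Complex.conj_mul'] using hχ
    have h2 := inner_self_eq_norm_sq_to_K (𝕜 := ℂ) ((WithLp.equiv 2 (Fin d → ℂ)).symm χ)
    rw [h1] at h2
    have h3 : (‖(WithLp.equiv 2 (Fin d → ℂ)).symm χ‖ : ℝ) ^ 2 = 1 := by
      have := h2.symm
      exact_mod_cast congrArg Complex.re this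
    nlinarith [norm_nonneg ((WithLp.equiv 2 (Fin d → ℂ)).symm χ)]
  have hy : star (A *ᵥ ψ) ⬝ᵥ (A *ᵥ ψ) = 1 := by
    rw [star_mulVec, hA.eq, dotProduct_mulVec, vecMul_vecMul, hA2, vecMul_one, hψ]
  have hx1 : ‖(WithLp.equiv 2 (Fin d → ℂ)).symm ψ‖ = 1 := key ψ hψ
  have hy1 : ‖(WithLp.equiv 2 (Fin d → ℂ)).symm (A *ᵥ ψ)‖ = 1 := key _ hy
  have hinner : (⟪(WithLp.equiv 2 (Fin d → ℂ)).symm ψ, (WithLp.equiv 2 (Fin d → ℂ)).symm (A *ᵥ ψ)⟫_ℂ)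
      = star ψ ⬝ᵥ (A *ᵥ ψ) := by
    rw [PiLp.inner_apply]
    simp [dotProduct, RCLike.inner_apply]
    exact Finset.sum_congr rfl fun i _ => mul_comm _ _
  have hcs := norm_inner_le_norm (𝕜 := ℂ) ((WithLp.equiv 2 (Fin d → ℂ)).symm ψ)
      ((WithLp.equiv 2 (Fin d → ℂ)).symm (A *ᵥ ψ))
  rw [hx1, hy1, hinner] at hcs
  have habs : |expectation A ψ| ≤ 1 := by
    rw [expectation]
    calc |(star ψ ⬝ᵥ (A *ᵥ ψ)).re| ≤ ‖star ψ ⬝ᵥ (A *ᵥ ψ)‖ := Complex.abs_re_le_norm _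
    _ ≤ 1 := by linarith
  rw [sq_le_one_iff_abs_le_one]
  exact habs

end Helpers

section Helpers2
open Matrix
set_option linter.unusedSectionVars false

lemma betaSet_bddAbove {V : Type*} [Fintype V] {d : ℕ}
    (S : V → Matrix (Fin d) (Fin d) ℂ)
    (h1 : ∀ i, (S i).IsHermitian) (h2 : ∀ i, S i * S i = 1)
    (w : V → ℝ) (hw : ∀ i, 0 ≤ w i) :
    BddAbove {r : ℝ | ∃ ψ : Fin d → ℂ, star ψ ⬝ᵥ ψ = 1 ∧
      r = ∑ i, w i * (expectation (S i) ψ) ^ 2} := by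
  refine ⟨∑ i, w i, ?_⟩
  rintro r ⟨ψ, hψ, rfl⟩
  apply Finset.sum_le_sum
  intro i _
  nlinarith [expectation_sq_le_one (h1 i) (h2 i) hψ, hw i, sq_nonneg (expectation (S i) ψ)]

lemma exists_joint_eigenvector {d : ℕ} {ι : Type*} [DecidableEq ι]
    (T : ι → Matrix (Fin d) (Fin d) ℂ) (hsq : ∀ i, T i * T i = 1)
    (I : Finset ι) (hcomm : ∀ i ∈ I, ∀ j ∈ I, T i * T j = T j * T i)
    (ψ0 : Fin d → ℂ) (h0 : ψ0 ≠ 0) :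
    ∃ ψ : Fin d → ℂ, ψ ≠ 0 ∧ ∀ i ∈ I, ∃ ε : ℝ, ε ^ 2 = 1 ∧ T i *ᵥ ψ = (ε : ℂ) • ψ := by
  classical
  induction I using Finset.induction with
  | empty => exact ⟨ψ0, h0, by simp⟩
  | @insert a I ha IH =>
    obtain ⟨ψ, hψ, hev⟩ := IH (fun i hi j hj =>
      hcomm i (Finset.mem_insert_of_mem hi) j (Finset.mem_insert_of_mem hj))
    have hTT : T a *ᵥ (T a *ᵥ ψ) = ψ := by
      rw [mulVec_mulVec, hsq a, one_mulVec]
    have key : ∀ ε : ℝ, ε ^ 2 = 1 → T a *ᵥ (ψ + (ε : ℂ) • (T a *ᵥ ψ))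
        = (ε : ℂ) • (ψ + (ε : ℂ) • (T a *ᵥ ψ)) := by
      intro ε hε
      have hε' : ((ε : ℂ)) * (ε : ℂ) = 1 := by
        have : (ε : ℂ) ^ 2 = 1 := by exact_mod_cast congrArg (fun x : ℝ => (x : ℂ)) hε
        rwa [sq] at this
      rw [mulVec_add, mulVec_smul, hTT, smul_add, smul_smul, hε', one_smul, add_comm]
    by_cases hz : ψ + (1 : ℂ) • (T a *ᵥ ψ) = 0
    · refine ⟨ψ + ((-1 : ℝ) : ℂ) • (T a *ᵥ ψ), ?_, ?_⟩
      · intro hz2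
        apply hψ
        have e1 : ψ + (1:ℂ) • (T a *ᵥ ψ) + (ψ + ((-1:ℝ):ℂ) • (T a *ᵥ ψ)) = (2:ℂ) • ψ := by
          push_cast
          module
        have h2 : (2 : ℂ) • ψ = 0 := by rw [← e1, hz, hz2, add_zero]
        rcases smul_eq_zero.mp h2 with h | h
        · norm_num at h
        · exact h
      · intro i hi
        rcases Finset.mem_insert.mp hi with rfl | hi'
        · exact ⟨-1, by norm_num, key (-1) (by norm_num)⟩
        · obtain ⟨ε, hε, hevi⟩ := hev i hi'
          refine ⟨ε, hε, ?_⟩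
          have hcom : T i *ᵥ (T a *ᵥ ψ) = T a *ᵥ (T i *ᵥ ψ) := by
            rw [mulVec_mulVec, mulVec_mulVec,
              hcomm i (Finset.mem_insert_of_mem hi') a (Finset.mem_insert_self a I)]
          rw [mulVec_add, mulVec_smul, hcom, hevi, mulVec_smul, smul_add]
          rw [smul_comm]
    · refine ⟨ψ + (1 : ℂ) • (T a *ᵥ ψ), hz, ?_⟩
      intro i hi
      rcases Finset.mem_insert.mp hi with rfl | hi'
      · refine ⟨1, by norm_num, ?_⟩
        have := key 1 (by norm_num)
        simpa using this
      · obtain ⟨ε, hε, hevi⟩ := hev i hi'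
        refine ⟨ε, hε, ?_⟩
        have hcom : T i *ᵥ (T a *ᵥ ψ) = T a *ᵥ (T i *ᵥ ψ) := by
          rw [mulVec_mulVec, mulVec_mulVec,
            hcomm i (Finset.mem_insert_of_mem hi') a (Finset.mem_insert_self a I)]
        rw [mulVec_add, mulVec_smul, hcom, hevi, mulVec_smul, smul_add]
        rw [smul_comm]

end Helpers2

section Helpers3
open Matrix
set_option linter.unusedSectionVars false

lemma indep_le_betaSet {V : Type*} [Fintype V] [DecidableEq V] {d : ℕ} (hd : 1 ≤ d)
    (S : V → Matrix (Fin d) (Fin d) ℂ) (h2 : ∀ i, S i * S i = 1)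
    (w : V → ℝ) (hw : ∀ i, 0 ≤ w i) (I : Finset V)
    (hIcomm : ∀ i ∈ I, ∀ j ∈ I, S i * S j = S j * S i) :
    ∃ r ∈ {r : ℝ | ∃ ψ : Fin d → ℂ, star ψ ⬝ᵥ ψ = 1 ∧
      r = ∑ i, w i * (expectation (S i) ψ) ^ 2}, ∑ i ∈ I, w i ≤ r := by
  have h0 : (fun _ : Fin d => (1 : ℂ)) ≠ 0 := by
    intro h
    have := congrFun h ⟨0, hd⟩
    simp at this
  obtain ⟨ψ, hψ, hev⟩ := exists_joint_eigenvector S h2 I hIcomm _ h0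
  set n : ℝ := ∑ i, Complex.normSq (ψ i) with hn
  have hnpos : 0 < n := by
    have : ∃ i, ψ i ≠ 0 := by
      by_contra h
      push_neg at h
      exact hψ (funext fun i => h i)
    obtain ⟨i0, hi0⟩ := this
    have : 0 < Complex.normSq (ψ i0) := Complex.normSq_pos.mpr hi0
    have hle : ∀ i ∈ Finset.univ, 0 ≤ Complex.normSq (ψ i) := fun i _ => Complex.normSq_nonneg _
    exact Finset.sum_pos' hle ⟨i0, Finset.mem_univ i0, this⟩
  set c : ℝ := (Real.sqrt n)⁻¹ with hc
  have hcc : c * c * n = 1 := by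
    rw [hc, ← mul_inv]
    rw [Real.mul_self_sqrt hnpos.le]
    exact inv_mul_cancel₀ hnpos.ne'
  set ψ' : Fin d → ℂ := (c : ℂ) • ψ with hψ'
  have hunit : star ψ' ⬝ᵥ ψ' = 1 := by
    rw [hψ', star_smul, smul_dotProduct, dotProduct_smul, star_dot_self_re, ← hn]
    simp only [smul_eq_mul, Complex.star_def, Complex.conj_ofReal]
    push_cast
    rw [← mul_assoc]
    exact_mod_cast congrArg (fun x : ℝ => (x : ℂ)) hcc
  have hexp : ∀ i ∈ I, (expectation (S i) ψ') ^ 2 = 1 := by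
    intro i hi
    obtain ⟨ε, hε, hevi⟩ := hev i hi
    have hmv : S i *ᵥ ψ' = (ε : ℂ) • ψ' := by
      rw [hψ', mulVec_smul, hevi, smul_comm]
    have : expectation (S i) ψ' = ε := by
      rw [expectation, hmv, dotProduct_smul, hunit]
      simp
    rw [this, hε]
  refine ⟨∑ i, w i * (expectation (S i) ψ') ^ 2, ⟨ψ', hunit, rfl⟩, ?_⟩
  calc ∑ i ∈ I, w i = ∑ i ∈ I, w i * (expectation (S i) ψ') ^ 2 := by
        apply Finset.sum_congr rfl
        intro i hi
        rw [hexp i hi, mul_one]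
    _ ≤ ∑ i, w i * (expectation (S i) ψ') ^ 2 := by
        apply Finset.sum_le_sum_of_subset_of_nonneg (Finset.subset_univ I)
        intro i _ _
        exact mul_nonneg (hw i) (sq_nonneg _)

end Helpers3

section Construction
open Matrix Kronecker
set_option linter.unusedSectionVars false
set_option maxHeartbeats 1000000

lemma main_construction {V : Type*} [Fintype V] (G : SimpleGraph V) (s : Set V)
    [DecidablePred (· ∈ s)] (d : ℕ) (hd : 1 ≤ d)
    (S : (↥s) → Matrix (Fin d) (Fin d) ℂ)
    (hS : IsRealization (SimpleGraph.induce s G) d S) :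
    ∃ D : ℕ, 1 ≤ D ∧ ∃ T : V → Matrix (Fin D) (Fin D) ℂ, IsRealization G D T ∧
      ∀ ψ : Fin d → ℂ, star ψ ⬝ᵥ ψ = 1 → ∃ ψ' : Fin D → ℂ, star ψ' ⬝ᵥ ψ' = 1 ∧
        ∀ (v : V) (hv : v ∈ s), expectation (T v) ψ' = expectation (S ⟨v, hv⟩) ψ := by
  classical
  obtain ⟨hSherm, hSsq, hSanti, hScomm⟩ := hS
  have hadj : ∀ i j : ↥s, (SimpleGraph.induce s G).Adj i j ↔ G.Adj ↑i ↑j := by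
    intro i j
    simp [SimpleGraph.comap_adj]
  set O := {v : V // v ∉ s} with hO
  let Q' := O → Bool
  let ord : O → ℕ := fun u => (Fintype.equivFin O u : ℕ)
  have hordinj : Function.Injective ord := fun a b h =>
    (Fintype.equivFin O).injective (Fin.ext h)
  let z : V → Q' := fun v j => if h : v ∈ s then decide (G.Adj v ↑j)
    else decide (ord j < ord ⟨v, h⟩ ∧ G.Adj v ↑j)
  let c : V → Q' := fun v j => if h : v ∈ s then false else decide ((⟨v, h⟩ : O) = j)
  let M : V → Matrix (Fin d) (Fin d) ℂ := fun v => if h : v ∈ s then S ⟨v, h⟩ else 1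
  let K : V → Matrix (Fin d × Q') (Fin d × Q') ℂ := fun v => (M v) ⊗ₖ (Wm (z v) (c v))
  set D := Fintype.card (Fin d × Q') with hDdef
  have hD : 1 ≤ D := Fintype.card_pos_iff.mpr ⟨(⟨0, hd⟩, fun _ => false)⟩
  let E : Fin D ≃ (Fin d × Q') := (Fintype.equivFin (Fin d × Q')).symm
  let T : V → Matrix (Fin D) (Fin D) ℂ := fun v => (K v).submatrix E E
  -- basic eps facts
  have heps_cc : ∀ v, eps (z v) (c v) = 1 := by
    intro v
    apply eps_eq_one
    intro j
    by_cases hv : v ∈ s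
    · simp [z, c, hv]
    · simp only [z, c, dif_neg hv]
      rintro ⟨h1, h2⟩
      rw [decide_eq_true_eq] at h1 h2
      rw [← h2] at h1
      exact absurd h1.1 (lt_irrefl _)
  have heps_sc : ∀ (v u : V) (hu : u ∈ s), eps (z v) (c u) = 1 := by
    intro v u hu
    apply eps_eq_one
    intro j
    simp [c, hu]
  have heps_oc : ∀ (zz : Q') (u : V) (hu : u ∉ s),
      eps zz (c u) = if zz ⟨u, hu⟩ then -1 else 1 := by
    intro zz u hu
    have : c u = fun j => decide ((⟨u, hu⟩ : O) = j) := by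
      funext j
      simp [c, hu]
    rw [this, eps_single]
  -- cross sign
  have heps_cross : ∀ v u : V, v ≠ u → ¬(v ∈ s ∧ u ∈ s) →
      eps (z v) (c u) * eps (z u) (c v) = (if G.Adj v u then -1 else 1 : ℂ) := by
    intro v u hvu hns
    by_cases hv : v ∈ s <;> by_cases hu : u ∈ s
    · exact absurd ⟨hv, hu⟩ hns
    · -- v ∈ s, u ∉ s
      rw [heps_sc u v hv, mul_one, heps_oc (z v) u hu]
      have : z v ⟨u, hu⟩ = decide (G.Adj v u) := by simp [z, hv]
      rw [this]
      simp only [decide_eq_true_eq]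
    · -- v ∉ s, u ∈ s
      rw [heps_sc v u hu, one_mul, heps_oc (z u) v hv]
      have : z u ⟨v, hv⟩ = decide (G.Adj u v) := by simp [z, hu]
      rw [this]
      have hsymm : G.Adj u v ↔ G.Adj v u := ⟨fun h => h.symm, fun h => h.symm⟩
      simp only [decide_eq_true_eq]
      rw [if_congr hsymm rfl rfl]
    · -- both outside
      rw [heps_oc (z v) u hu, heps_oc (z u) v hv]
      have hzv : z v ⟨u, hu⟩ = decide (ord ⟨u, hu⟩ < ord ⟨v, hv⟩ ∧ G.Adj v u) := by
        simp [z, hv]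
      have hzu : z u ⟨v, hv⟩ = decide (ord ⟨v, hv⟩ < ord ⟨u, hu⟩ ∧ G.Adj u v) := by
        simp [z, hu]
      rw [hzv, hzu]
      have hne : ord ⟨u, hu⟩ ≠ ord ⟨v, hv⟩ := by
        intro h
        have h3 : u = v := congrArg Subtype.val (hordinj h)
        exact hvu h3.symm
      have hsymm : G.Adj u v ↔ G.Adj v u := ⟨fun h => h.symm, fun h => h.symm⟩
      simp only [decide_eq_true_eq]
      by_cases hA : G.Adj v u
      · rcases lt_or_gt_of_ne hne with h | h
        · rw [if_pos ⟨h, hA⟩, if_neg (by rintro ⟨h', -⟩; exact absurd h' (not_lt_of_gt h)),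
            if_pos hA, mul_one]
        · rw [if_neg (by rintro ⟨h', -⟩; exact absurd h' (not_lt_of_gt h)),
            if_pos ⟨h, hsymm.mpr hA⟩, if_pos hA, one_mul]
      · rw [if_neg (by rintro ⟨-, h'⟩; exact hA h'),
          if_neg (by rintro ⟨-, h'⟩; exact hA (hsymm.mp h')), if_neg hA, one_mul]
  -- M facts
  have hMherm : ∀ v, (M v).IsHermitian := by
    intro v
    by_cases hv : v ∈ s
    · simp only [M, dif_pos hv]
      exact hSherm _
    · simp only [M, dif_neg hv]
      exact isHermitian_one
  have hMsq : ∀ v, M v * M v = 1 := by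
    intro v
    by_cases hv : v ∈ s
    · simp only [M, dif_pos hv]
      exact hSsq _
    · simp only [M, dif_neg hv, one_mul]
  -- K multiplication
  have hKmul : ∀ v u, K v * K u = eps (z v) (c u) •
      ((M v * M u) ⊗ₖ Wm (fun i => xor (z v i) (z u i)) (fun i => xor (c v i) (c u i))) := by
    intro v u
    show ((M v) ⊗ₖ Wm (z v) (c v)) * ((M u) ⊗ₖ Wm (z u) (c u)) = _
    rw [← Matrix.mul_kronecker_mul, Wm_mul, Matrix.kronecker_smul]
  have hxorcomm : ∀ f g : Q', (fun i => xor (f i) (g i)) = (fun i => xor (g i) (f i)) := by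
    intro f g
    funext i
    exact Bool.xor_comm _ _
  -- realization
  have hTreal : IsRealization G D T := by
    refine ⟨?_, ?_, ?_, ?_⟩
    · intro v
      show ((K v).submatrix E E).IsHermitian
      have hk : (K v)ᴴ = K v := by
        show ((M v) ⊗ₖ Wm (z v) (c v))ᴴ = _
        rw [kron_conjTranspose, (hMherm v).eq, Wm_herm, Matrix.kronecker_smul, heps_cc,
          one_smul]
      show ((K v).submatrix E E)ᴴ = (K v).submatrix E E
      rw [conjTranspose_submatrix, hk]
    · intro v
      show (K v).submatrix E E * (K v).submatrix E E = 1
      rw [submatrix_mul_equiv]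
      have : K v * K v = 1 := by
        show ((M v) ⊗ₖ Wm (z v) (c v)) * ((M v) ⊗ₖ Wm (z v) (c v)) = 1
        rw [← Matrix.mul_kronecker_mul, hMsq, Wm_sq, heps_cc, one_smul, Matrix.one_kronecker_one]
      rw [this, submatrix_one_equiv]
    · -- anticommute on edges
      intro v u hA
      have hvu : v ≠ u := G.ne_of_adj hA
      show (K v).submatrix E E * (K u).submatrix E E = -((K u).submatrix E E * (K v).submatrix E E)
      suffices h : K v * K u = -(K u * K v) by
        rw [submatrix_mul_equiv, submatrix_mul_equiv, h]
        rfl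
      rw [hKmul, hKmul]
      by_cases hv : v ∈ s <;> by_cases hu : u ∈ s
      · -- both in s : sign from M part
        have hMvu : M v * M u = -(M u * M v) := by
          simp only [M, dif_pos hv, dif_pos hu]
          exact hSanti _ _ ((hadj ⟨v, hv⟩ ⟨u, hu⟩).mpr hA)
        rw [heps_sc v u hu, heps_sc u v hv, one_smul, one_smul, hMvu, neg_kron,
          hxorcomm (z u) (z v), hxorcomm (c u) (c v)]
      all_goals {
        have hMcomm : M v * M u = M u * M v := by
          first
          | (simp only [M, dif_neg hu]; rw [mul_one, one_mul])
          | (simp only [M, dif_neg hv]; rw [mul_one, one_mul])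
        have hns' : ¬(v ∈ s ∧ u ∈ s) := by tauto
        have hcross := heps_cross v u hvu hns'
        rw [if_pos hA] at hcross
        have h1 : eps (z v) (c u) = -eps (z u) (c v) := by
          have h2 := eps_mul_self (z u) (c v)
          calc eps (z v) (c u) = eps (z v) (c u) * (eps (z u) (c v) * eps (z u) (c v)) := by
                rw [h2, mul_one]
            _ = (eps (z v) (c u) * eps (z u) (c v)) * eps (z u) (c v) := by ring
            _ = -eps (z u) (c v) := by rw [hcross]; ring
        rw [h1, hMcomm, hxorcomm (z u) (z v), hxorcomm (c u) (c v), neg_smul]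
      }
    · -- commute on non-edges
      intro v u hvu hnA
      show (K v).submatrix E E * (K u).submatrix E E = (K u).submatrix E E * (K v).submatrix E E
      suffices h : K v * K u = K u * K v by
        rw [submatrix_mul_equiv, submatrix_mul_equiv, h]
      rw [hKmul, hKmul]
      by_cases hv : v ∈ s <;> by_cases hu : u ∈ s
      · have hMvu : M v * M u = M u * M v := by
          simp only [M, dif_pos hv, dif_pos hu]
          apply hScomm
          · intro h
            exact hvu (congrArg Subtype.val h)
          · intro h
            exact hnA ((hadj ⟨v, hv⟩ ⟨u, hu⟩).mp h)
        rw [heps_sc v u hu, heps_sc u v hv, hMvu, hxorcomm (z u) (z v), hxorcomm (c u) (c v)]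
      all_goals {
        have hMcomm : M v * M u = M u * M v := by
          first
          | (simp only [M, dif_neg hu]; rw [mul_one, one_mul])
          | (simp only [M, dif_neg hv]; rw [mul_one, one_mul])
        have hns' : ¬(v ∈ s ∧ u ∈ s) := by tauto
        have hcross := heps_cross v u hvu hns'
        rw [if_neg hnA] at hcross
        have h1 : eps (z v) (c u) = eps (z u) (c v) := by
          have h2 := eps_mul_self (z u) (c v)
          calc eps (z v) (c u) = eps (z v) (c u) * (eps (z u) (c v) * eps (z u) (c v)) := by
                rw [h2, mul_one]
            _ = (eps (z v) (c u) * eps (z u) (c v)) * eps (z u) (c v) := by ring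
            _ = eps (z u) (c v) := by rw [hcross]; ring
        rw [h1, hMcomm, hxorcomm (z u) (z v), hxorcomm (c u) (c v)]
      }
  -- transfer of unit vectors
  refine ⟨D, hD, T, hTreal, ?_⟩
  intro ψ hψ
  let q0 : Q' := fun _ => false
  let φ : Q' → ℂ := fun q => if q = q0 then 1 else 0
  let χ : Fin d × Q' → ℂ := fun x => ψ x.1 * φ x.2
  refine ⟨fun x => χ (E x), ?_, ?_⟩
  · have hsum : (star fun x => χ (E x)) ⬝ᵥ (fun x => χ (E x)) = star χ ⬝ᵥ χ := by
      rw [dotProduct, dotProduct]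
      exact Fintype.sum_equiv E _ _ (fun x => rfl)
    rw [hsum]
    have hphi : star φ ⬝ᵥ φ = 1 := by
      rw [dotProduct]
      rw [Finset.sum_eq_single q0]
      · simp [φ]
      · intro q _ hq
        simp [φ, hq]
      · simp
    have := dot_prod_split ψ ψ φ φ
    rw [show χ = fun x : Fin d × Q' => ψ x.1 * φ x.2 from rfl, this, hψ, hphi, one_mul]
  · intro v hv
    have hmv : T v *ᵥ (fun x => χ (E x)) = fun x => (K v *ᵥ χ) (E x) := by
      show (K v).submatrix E E *ᵥ _ = _
      rw [submatrix_mulVec_equiv]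
      have : (fun x => χ (E x)) ∘ E.symm = χ := by
        funext y
        simp
      rw [this]
      rfl
    have hWphi : Wm (z v) (c v) *ᵥ φ = φ := by
      have hcv : c v = q0 := by
        funext j
        simp [c, hv, q0]
      rw [hcv]
      funext p
      rw [mulVec, dotProduct]
      rw [Finset.sum_eq_single q0]
      · have : Wm (z v) q0 p q0 = if p = q0 then 1 else 0 := by
          simp only [Wm, of_apply]
          have h1 : (fun i => xor (q0 i) (q0 i)) = q0 := by
            funext i
            simp [q0]
          rw [h1]
          have h2 : eps (z v) q0 = 1 := eps_eq_one (by simp [q0])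
          rw [h2]
        rw [this]
        simp [φ]
      · intro q _ hq
        simp [φ, hq]
      · simp
    have hKv : K v *ᵥ χ = fun x => ((M v *ᵥ ψ) x.1 * φ x.2) := by
      show ((M v) ⊗ₖ Wm (z v) (c v)) *ᵥ _ = _
      rw [show χ = fun x : Fin d × Q' => ψ x.1 * φ x.2 from rfl, kron_mulVec, hWphi]
    rw [expectation, expectation, hmv]
    have hdot : (star fun x => χ (E x)) ⬝ᵥ (fun x => (K v *ᵥ χ) (E x))
        = star χ ⬝ᵥ (K v *ᵥ χ) := by
      rw [dotProduct, dotProduct]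
      exact Fintype.sum_equiv E _ _ (fun x => rfl)
    rw [hdot, hKv]
    have hphi : star φ ⬝ᵥ φ = 1 := by
      rw [dotProduct]
      rw [Finset.sum_eq_single q0]
      · simp [φ]
      · intro q _ hq
        simp [φ, hq]
      · simp
    have hsplit := dot_prod_split ψ (M v *ᵥ ψ) φ φ
    rw [show χ = fun x : Fin d × Q' => ψ x.1 * φ x.2 from rfl, hsplit, hphi, mul_one]
    have : M v = S ⟨v, hv⟩ := by simp [M, hv]
    rw [this]

end Construction

/-- Any induced subgraph of an ħ-perfect graph is ħ-perfect. -/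
theorem stmt_4 {V : Type*} [Fintype V] (G : SimpleGraph V) (s : Set V)
    [DecidablePred (· ∈ s)] (hG : HbarPerfect G) :
    HbarPerfect (SimpleGraph.induce s G) := by
  classical
  intro d hd S hS w hw
  obtain ⟨D, hD, T, hTreal, htrans⟩ := main_construction G s d hd S hS
  set w' : V → ℝ := fun v => if h : v ∈ s then w ⟨v, h⟩ else 0 with hw'def
  have hw' : ∀ v, 0 ≤ w' v := by
    intro v
    by_cases hv : v ∈ s <;> simp [w', hv]
    exact hw _
  have hbeta : betaVal T w' = alphaW G w' := hG D hD T hTreal w' hw'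
  -- alphaW equality
  have halpha : alphaW G w' = alphaW (SimpleGraph.induce s G) w := by
    unfold alphaW
    congr 1
    ext r
    constructor
    · rintro ⟨J, hJ, rfl⟩
      refine ⟨J.subtype (· ∈ s), ?_, ?_⟩
      · intro a ha b hb hAdj
        rw [Finset.mem_subtype] at ha hb
        exact hJ _ ha _ hb hAdj
      · calc ∑ v ∈ J, w' v = ∑ v ∈ J.filter (· ∈ s), w' v := by
              refine (Finset.sum_filter_of_ne ?_).symm
              intro v _ hnz
              by_contra hv
              exact hnz (by simp [w', hv])
          _ = ∑ i ∈ J.subtype (· ∈ s), w' ↑i := by rw [Finset.sum_subtype_eq_sum_filter]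
          _ = ∑ i ∈ J.subtype (· ∈ s), w i := by
              apply Finset.sum_congr rfl
              intro i _
              simp [w']
    · rintro ⟨I, hI, rfl⟩
      refine ⟨I.map ⟨Subtype.val, Subtype.val_injective⟩, ?_, ?_⟩
      · intro a ha b hb hAdj
        obtain ⟨i, hi, rfl⟩ := Finset.mem_map.mp ha
        obtain ⟨j, hj, rfl⟩ := Finset.mem_map.mp hb
        by_cases hij : i = j
        · subst hij
          exact G.loopless.irrefl _ hAdj
        · exact hI i hi j hj hAdj
      · rw [Finset.sum_map]
        apply Finset.sum_congr rfl
        intro i _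
        simp [w']
  have hbddS := betaSet_bddAbove S hS.1 hS.2.1 w hw
  have hbddT := betaSet_bddAbove T hTreal.1 hTreal.2.1 w' hw'
  have hneS : Set.Nonempty {r : ℝ | ∃ ψ : Fin d → ℂ, star ψ ⬝ᵥ ψ = 1 ∧
      r = ∑ i, w i * (expectation (S i) ψ) ^ 2} := by
    obtain ⟨r, hr, -⟩ := indep_le_betaSet hd S hS.2.1 w hw ∅ (by simp)
    exact ⟨r, hr⟩
  -- upper bound
  have h1 : betaVal S w ≤ betaVal T w' := by
    unfold betaVal
    apply csSup_le_csSup hbddT hneS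
    rintro r ⟨ψ, hψ, rfl⟩
    obtain ⟨ψ', hψ', hexp⟩ := htrans ψ hψ
    refine ⟨ψ', hψ', ?_⟩
    calc ∑ i : ↥s, w i * (expectation (S i) ψ) ^ 2
        = ∑ i : ↥s, w' ↑i * (expectation (T ↑i) ψ') ^ 2 := by
          apply Finset.sum_congr rfl
          intro i _
          have h2 : expectation (T ↑i) ψ' = expectation (S i) ψ := by
            rw [hexp ↑i i.2]
          rw [h2]
          congr 1
          simp [w']
      _ = ∑ v ∈ Finset.univ.filter (· ∈ s), w' v * (expectation (T v) ψ') ^ 2 := by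
          rw [← Finset.sum_subtype_eq_sum_filter, Finset.subtype_univ]
      _ = ∑ v, w' v * (expectation (T v) ψ') ^ 2 := by
          apply Finset.sum_filter_of_ne
          intro v _ hnz
          by_contra hv
          exact hnz (by simp [w', hv])
  -- lower bound
  have h3 : alphaW (SimpleGraph.induce s G) w ≤ betaVal S w := by
    have hzero : (0 : ℝ) ≤ betaVal S w := by
      obtain ⟨r', hr', hle⟩ := indep_le_betaSet hd S hS.2.1 w hw ∅ (by simp)
      have h0 : (0 : ℝ) ≤ r' := by simpa using hle
      exact h0.trans (le_csSup hbddS hr')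
    unfold alphaW
    apply Real.sSup_le _ hzero
    rintro r ⟨I, hI, rfl⟩
    have hIcomm : ∀ i ∈ I, ∀ j ∈ I, S i * S j = S j * S i := by
      intro i hi j hj
      by_cases hij : i = j
      · subst hij; rfl
      · exact hS.2.2.2 i j hij (hI i hi j hj)
    obtain ⟨r', hr', hle⟩ := indep_le_betaSet hd S hS.2.1 w hw I hIcomm
    exact hle.trans (le_csSup hbddS hr')
  have h2 : betaVal S w ≤ alphaW (SimpleGraph.induce s G) w := by
    calc betaVal S w ≤ betaVal T w' := h1
      _ = alphaW (SimpleGraph.induce s G) w := hbeta.trans halpha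
  exact le_antisymm h2 h3
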